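/- In the full standard model ℛ of second-order arithmetic, for every finite tuple of real parameters b̄, there exist continuum-many b̄-typical reals and fewer than continuum-many non-b̄-typical reals, using that cf(2^{ℵ₀}) > ℵ₀. -/

import Mathlib

open Cardinal FirstOrder

/-- The language of (full) second-order arithmetic, rendered one-sorted:
two constants `0, 1`, two binary functions `+, ·`, and two binary relations
`<, ∈` (indexed by `Bool`). -/
def L2 : FirstOrder.Language where
  Functions := fun n => match n with
    | 0 => Bool  -- the constants 0 and 1
    | 2 => Bool  -- the binary operations + and ·
    | _ => Empty
  Relations := fun n => match n with
    | 2 => Bool  -- the binary relations < and ∈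
    | _ => Empty

/-- The domain of the full standard model `ℛ` of second-order arithmetic:
numbers together with reals (sets of numbers). -/
abbrev R2 : Type := ℕ ⊕ Set ℕ

/-- The full standard model `ℛ = (ω, 𝒫(ω), +, ·, <, ∈, 0, 1)`.  The arithmetic
operations are extended by `0` outside the number sort, and the relations
`<`, `∈` hold only for arguments of the appropriate sorts. -/
noncomputable instance L2StructureR2 : L2.Structure R2 where
  funMap {n} f x :=
    match n, f, x with
    | 0, b, _ => Sum.inl (cond b 1 0)
    | 2, b, x =>
      match x 0, x 1 with
      | Sum.inl m, Sum.inl k => Sum.inl (cond b (m + k) (m * k))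
      | _, _ => Sum.inl 0
  RelMap {n} r x :=
    match n, r, x with
    | 2, true, x => ∃ m k : ℕ, x 0 = Sum.inl m ∧ x 1 = Sum.inl k ∧ m < k
    | 2, false, x => ∃ (m : ℕ) (s : Set ℕ), x 0 = Sum.inl m ∧ x 1 = Sum.inr s ∧ m ∈ s

/-- `a` is typical relative to the tuple `b̄` of real parameters: every set
definable in `ℛ` with parameters among `b̄` and containing `a` has
continuum-many reals in it. -/
def Tp {k : ℕ} (bbar : Fin k → Set ℕ) (a : Set ℕ) : Prop :=
  ∀ s : Set R2, (Set.range (fun i => (Sum.inr (bbar i) : R2))).Definable₁ L2 s →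
    Sum.inr a ∈ s → #(↥{x : Set ℕ | Sum.inr x ∈ s}) = Cardinal.continuum

instance (n : ℕ) : Countable (L2.Functions n) :=
  match n with
  | 0 => inferInstanceAs (Countable Bool)
  | 1 => inferInstanceAs (Countable Empty)
  | 2 => inferInstanceAs (Countable Bool)
  | _ + 3 => inferInstanceAs (Countable Empty)

instance (n : ℕ) : Countable (L2.Relations n) :=
  match n with
  | 0 => inferInstanceAs (Countable Empty)
  | 1 => inferInstanceAs (Countable Empty)
  | 2 => inferInstanceAs (Countable Bool)
  | _ + 3 => inferInstanceAs (Countable Empty)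

lemma L2_card_le : L2.card ≤ ℵ₀ := by
  rw [FirstOrder.Language.card, FirstOrder.Language.Symbols]
  exact mk_le_aleph0

lemma aleph0_lt_cof_continuum : ℵ₀ < Cardinal.continuum.ord.cof := by
  have := Cardinal.lt_cof_power (le_refl ℵ₀) one_lt_two
  rwa [two_power_aleph0] at this

lemma mk_setNat : #(Set ℕ) = Cardinal.continuum := by
  rw [mk_set, mk_nat, two_power_aleph0]

lemma mk_formula_le (k : ℕ) (bbar : Fin k → Set ℕ) :
    #((L2[[↥(Set.range (fun i => (Sum.inr (bbar i) : R2)))]]).Formula (Fin 1)) ≤ ℵ₀ := by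
  set A : Set R2 := Set.range (fun i => (Sum.inr (bbar i) : R2)) with hA
  have h1 : #((L2[[↥A]]).Formula (Fin 1)) ≤
      #(Σ n, (L2[[↥A]]).BoundedFormula (Fin 1) n) := by
    refine mk_le_of_injective (f := fun φ => ⟨0, φ⟩) ?_
    intro φ ψ h
    simpa using h
  refine h1.trans ((FirstOrder.Language.BoundedFormula.card_le).trans ?_)
  have hcard : (L2[[↥A]]).card ≤ ℵ₀ := by
    rw [FirstOrder.Language.card_withConstants]
    simp only [Cardinal.lift_id]
    have hAfin : #(↥A) ≤ ℵ₀ := by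
      refine le_trans (Cardinal.mk_range_le) ?_
      exact le_trans (le_of_lt (Cardinal.lt_aleph0_of_finite _)) le_rfl
    exact (add_le_add L2_card_le hAfin).trans (by simp)
  simp only [Cardinal.lift_id, max_le_iff]
  constructor
  · rfl
  · refine (add_le_add (by exact (Cardinal.mk_fintype (Fin 1) ▸ le_of_lt
      (Cardinal.nat_lt_aleph0 1))) hcard).trans (by simp)

/-- In the full standard model of second-order arithmetic, for every finite
tuple `b̄` of real parameters there are continuum-many `b̄`-typical reals and
fewer than continuum-many non-`b̄`-typical reals. -/
theorem typical_reals_card (k : ℕ) (bbar : Fin k → Set ℕ) :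
    #(↥{a : Set ℕ | Tp bbar a}) = Cardinal.continuum ∧
    #(↥{a : Set ℕ | ¬ Tp bbar a}) < Cardinal.continuum := by
  set A : Set R2 := Set.range (fun i => (Sum.inr (bbar i) : R2)) with hA
  -- the "real part" of the set defined by a formula
  set F : (L2[[↥A]]).Formula (Fin 1) → Set (Set ℕ) :=
    fun φ => {x | φ.Realize (fun _ => (Sum.inr x : R2))} with hF
  -- index type: formulas defining small sets
  set ι := {φ : (L2[[↥A]]).Formula (Fin 1) // #(↥(F φ)) < Cardinal.continuum} with hι
  have hsub : {a : Set ℕ | ¬ Tp bbar a} ⊆ ⋃ i : ι, F i.1 := by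
    intro a ha
    simp only [Set.mem_setOf_eq, Tp, not_forall] at ha
    obtain ⟨s, hdef, hmem, hne⟩ := ha
    obtain ⟨φ, hφ⟩ := hdef
    have hFs : F φ = {x : Set ℕ | Sum.inr x ∈ s} := by
      ext x
      have : (fun _ : Fin 1 => (Sum.inr x : R2)) ∈
          {v : Fin 1 → R2 | v 0 ∈ s} ↔ φ.Realize (fun _ => (Sum.inr x : R2)) := by
        rw [hφ]; rfl
      simpa [hF] using this.symm
    have hlt : #(↥(F φ)) < Cardinal.continuum := by
      rw [hFs]
      refine lt_of_le_of_ne ?_ hne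
      exact le_trans (Cardinal.mk_set_le _) mk_setNat.le
    refine Set.mem_iUnion.2 ⟨⟨φ, hlt⟩, ?_⟩
    rw [hFs]
    exact hmem
  have hι_le : #ι ≤ ℵ₀ := le_trans (Cardinal.mk_subtype_le _) (mk_formula_le k bbar)
  have hnontyp : #(↥{a : Set ℕ | ¬ Tp bbar a}) < Cardinal.continuum := by
    refine lt_of_le_of_lt (Cardinal.mk_le_mk_of_subset hsub) ?_
    refine lt_of_le_of_lt (Cardinal.mk_iUnion_le _) ?_
    refine Cardinal.mul_lt_of_lt Cardinal.aleph0_le_continuum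
      (lt_of_le_of_lt hι_le Cardinal.aleph0_lt_continuum) ?_
    refine Ordinal.iSup_lt ?_ ?_
    · exact lt_of_le_of_lt hι_le aleph0_lt_cof_continuum
    · exact fun i => i.2
  refine ⟨?_, hnontyp⟩
  have hcompl : #(↥{a : Set ℕ | Tp bbar a}) + #(↥{a : Set ℕ | ¬ Tp bbar a})
      = Cardinal.continuum := by
    have h1 : {a : Set ℕ | ¬ Tp bbar a} = {a : Set ℕ | Tp bbar a}ᶜ := by
      ext a; simp
    rw [h1, Cardinal.mk_sum_compl, mk_setNat]
  by_contra hne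
  have hle : #(↥{a : Set ℕ | Tp bbar a}) ≤ Cardinal.continuum :=
    le_trans (Cardinal.mk_set_le _) mk_setNat.le
  have hlt : #(↥{a : Set ℕ | Tp bbar a}) < Cardinal.continuum := lt_of_le_of_ne hle hne
  have := Cardinal.add_lt_of_lt Cardinal.aleph0_le_continuum hlt hnontyp
  rw [hcompl] at this
  exact lt_irrefl _ this
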